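/- Let G be a finite weighted graph with peeling sequence H_n ⊇ H_{n−1} ⊇ … ⊇ H_1 produced by repeatedly removing a minimum-weighted-degree vertex. Then for every integer k with 1 ≤ k ≤ n, max_{i ≥ k} d(H_i) ≥ dal(G,k)/3, where dal(G,k) is the maximum density of an induced subgraph of G on at least k vertices. (That is, the greedy algorithm ChALK is a 3-approximation for the densest at-least-k-subgraph problem.) -/
import Mathlib


open Finset

variable {V : Type*} [Fintype V] [DecidableEq V]

/-- Weighted degree of vertex `v` in the subgraph induced on `S`. -/
def wDeg (w : V → V → ℝ) (S : Finset V) (v : V) : ℝ := ∑ u ∈ S, w v u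

/-- Total edge weight of the subgraph induced on `S`. -/
noncomputable def wTot (w : V → V → ℝ) (S : Finset V) : ℝ :=
  (∑ u ∈ S, ∑ x ∈ S, w u x) / 2

/-- Density of the subgraph induced on `S`. -/
noncomputable def dens (w : V → V → ℝ) (S : Finset V) : ℝ := wTot w S / S.card

lemma wTot_nonneg (w : V → V → ℝ) (hnn : ∀ u v, 0 ≤ w u v) (S : Finset V) :
    0 ≤ wTot w S := by
  unfold wTot
  apply div_nonneg _ (by norm_num)
  exact Finset.sum_nonneg fun u _ => Finset.sum_nonneg fun x _ => hnn u x

lemma dens_nonneg (w : V → V → ℝ) (hnn : ∀ u v, 0 ≤ w u v) (S : Finset V) :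
    0 ≤ dens w S :=
  div_nonneg (wTot_nonneg w hnn S) (by positivity)

lemma wTot_mono (w : V → V → ℝ) (hnn : ∀ u v, 0 ≤ w u v) {A B : Finset V}
    (h : A ⊆ B) : wTot w A ≤ wTot w B := by
  unfold wTot
  have h1 : ∑ u ∈ A, ∑ x ∈ A, w u x ≤ ∑ u ∈ B, ∑ x ∈ B, w u x := by
    calc ∑ u ∈ A, ∑ x ∈ A, w u x
        ≤ ∑ u ∈ A, ∑ x ∈ B, w u x :=
          Finset.sum_le_sum fun u _ =>
            Finset.sum_le_sum_of_subset_of_nonneg h (fun x _ _ => hnn u x)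
      _ ≤ ∑ u ∈ B, ∑ x ∈ B, w u x :=
          Finset.sum_le_sum_of_subset_of_nonneg h
            (fun u _ _ => Finset.sum_nonneg fun x _ => hnn u x)
  linarith

lemma wTot_erase (w : V → V → ℝ) (hsymm : ∀ u v, w u v = w v u)
    (hdiag : ∀ v, w v v = 0) {T : Finset V} {x : V} (hx : x ∈ T) :
    wTot w (T.erase x) = wTot w T - wDeg w T x := by
  unfold wTot wDeg
  rw [Finset.sum_congr rfl (fun u _ => Finset.sum_erase_eq_sub (f := w u) hx)]
  rw [Finset.sum_sub_distrib, Finset.sum_erase_eq_sub hx, Finset.sum_erase_eq_sub hx]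
  have h2 : ∑ u ∈ T, w u x = ∑ u ∈ T, w x u := Finset.sum_congr rfl fun u _ => hsymm u x
  rw [hdiag x, h2]
  ring

/-- ChALK is a 3-approximation for the densest
at-least-k-subgraph problem: some H_i with i ≥ k has density ≥ dal(G,k)/3. -/
theorem stmt7 (w : V → V → ℝ) (hsymm : ∀ u v, w u v = w v u)
    (hnn : ∀ u v, 0 ≤ w u v) (hdiag : ∀ v, w v v = 0)
    (H : ℕ → Finset V) (v : ℕ → V) (r : ℕ → ℝ)
    (hHn : H (Fintype.card V) = Finset.univ)
    (hpeel : ∀ i, 1 ≤ i → i ≤ Fintype.card V →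
      v i ∈ H i ∧ r i = wDeg w (H i) (v i) ∧
      (∀ u ∈ H i, r i ≤ wDeg w (H i) u) ∧ H (i - 1) = (H i).erase (v i))
    (k : ℕ) (hk : 1 ≤ k) (hkn : k ≤ Fintype.card V) :
    ∀ S : Finset V, k ≤ S.card →
      ∃ i, k ≤ i ∧ i ≤ Fintype.card V ∧ dens w S / 3 ≤ dens w (H i) := by
  intro S hS
  set n := Fintype.card V with hn
  -- cardinality of the peeled sets
  have hcard : ∀ m i, i + m = n → (H i).card = i := by
    intro m
    induction m with
    | zero =>
      intro i h
      have : i = n := by omega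
      subst this
      rw [hHn]
      exact Finset.card_univ
    | succ m ih =>
      intro i h
      obtain ⟨hv, _, _, hH⟩ := hpeel (i + 1) (by omega) (by omega)
      have hc := ih (i + 1) (by omega)
      have hi : i + 1 - 1 = i := by omega
      rw [hi] at hH
      rw [hH, Finset.card_erase_of_mem hv, hc]
      omega
  set d := dens w S with hd
  by_cases hd0 : d ≤ 0
  · refine ⟨k, le_refl k, hkn, ?_⟩
    have := dens_nonneg w hnn (H k)
    linarith
  push_neg at hd0
  by_contra hcon
  push_neg at hcon
  -- bound on the removed degree
  have hrbound : ∀ j, k ≤ j → j ≤ n → r j < 2 * (d / 3) := by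
    intro j hkj hjn
    obtain ⟨hv, hr, hmin, hH⟩ := hpeel j (le_trans hk hkj) hjn
    have hcj : (H j).card = j := hcard (n - j) j (by omega)
    have hj0 : (0 : ℝ) < j := by
      have : 0 < j := by omega
      exact_mod_cast this
    have hAvg : (j : ℝ) * r j ≤ 2 * wTot w (H j) := by
      have h1 : ∑ _u ∈ H j, r j ≤ ∑ u ∈ H j, wDeg w (H j) u := Finset.sum_le_sum hmin
      rw [Finset.sum_const, hcj, nsmul_eq_mul] at h1
      unfold wDeg at h1
      unfold wTot
      linarith
    have hdd : dens w (H j) = wTot w (H j) / j := by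
      unfold _root_.dens
      rw [hcj]
    have hwt : dens w (H j) * j = wTot w (H j) := by
      rw [hdd]
      field_simp
    have h2d : r j ≤ 2 * dens w (H j) := by
      nlinarith [hAvg, hj0, hwt]
    have := hcon j hkj hjn
    linarith
  -- one peeling step for the potential
  have hstep : ∀ j, k + 1 ≤ j → j ≤ n →
      wTot w (S ∩ H j) - (2 * (d / 3)) * (S ∩ H j).card ≤
      wTot w (S ∩ H (j - 1)) - (2 * (d / 3)) * (S ∩ H (j - 1)).card := by
    intro j hkj hjn
    obtain ⟨hv, hr, hmin, hH⟩ := hpeel j (by omega) hjn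
    rw [hH]
    have hie : S ∩ (H j).erase (v j) = (S ∩ H j).erase (v j) := by
      ext a
      simp only [Finset.mem_inter, Finset.mem_erase]
      tauto
    rw [hie]
    by_cases hvS : v j ∈ S
    · have hvin : v j ∈ S ∩ H j := Finset.mem_inter.mpr ⟨hvS, hv⟩
      rw [wTot_erase w hsymm hdiag hvin, Finset.card_erase_of_mem hvin]
      have hdeg : wDeg w (S ∩ H j) (v j) ≤ r j := by
        rw [hr]
        exact Finset.sum_le_sum_of_subset_of_nonneg Finset.inter_subset_right
          (fun x _ _ => hnn _ x)
      have hrb := hrbound j (by omega) hjn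
      have h1c : 1 ≤ (S ∩ H j).card := Finset.card_pos.mpr ⟨v j, hvin⟩
      rw [Nat.cast_sub h1c, Nat.cast_one]
      linarith
    · have hnot : v j ∉ S ∩ H j := fun h => hvS (Finset.mem_inter.mp h).1
      rw [Finset.erase_eq_of_notMem hnot]
  -- telescoping
  have htel : ∀ m, k ≤ n - m →
      wTot w (S ∩ H n) - (2 * (d / 3)) * (S ∩ H n).card ≤
      wTot w (S ∩ H (n - m)) - (2 * (d / 3)) * (S ∩ H (n - m)).card := by
    intro m
    induction m with
    | zero =>
      intro _
      simp
    | succ m ih =>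
      intro h
      have h1 : k ≤ n - m := by omega
      have h2 := hstep (n - m) (by omega) (by omega)
      rw [show n - m - 1 = n - (m + 1) from by omega] at h2
      exact le_trans (ih h1) h2
  have hfin := htel (n - k) (by omega)
  rw [show n - (n - k) = k from by omega] at hfin
  have hSn : S ∩ H n = S := by rw [hHn]; exact Finset.inter_univ S
  rw [hSn] at hfin
  have hScard : (0 : ℝ) < S.card := by
    have : 0 < S.card := by omega
    exact_mod_cast this
  have hWS : wTot w S = d * S.card := by
    rw [hd]
    unfold _root_.dens
    field_simp
  have h1 : wTot w (S ∩ H k) ≤ wTot w (H k) := wTot_mono w hnn Finset.inter_subset_right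
  have hck : (H k).card = k := hcard (n - k) k (by omega)
  have hk0 : (0 : ℝ) < k := by
    have : 0 < k := by omega
    exact_mod_cast this
  have h2 : wTot w (H k) = dens w (H k) * k := by
    unfold _root_.dens
    rw [hck]
    field_simp
  have h3 := hcon k le_rfl hkn
  have hcardS : (k : ℝ) ≤ S.card := by exact_mod_cast hS
  have hc2 : (0 : ℝ) ≤ (S ∩ H k).card := by positivity
  have e1 : dens w (H k) * k < (d / 3) * k := by
    exact mul_lt_mul_of_pos_right h3 hk0
  have e2 : (d / 3) * k ≤ (d / 3) * S.card :=
    mul_le_mul_of_nonneg_left hcardS (by linarith)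
  have e3 : 0 ≤ (2 * (d / 3)) * (S ∩ H k).card :=
    mul_nonneg (by linarith) hc2
  linarith
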